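/- Let G be a finite group and let 0 → M → F → N → 0 be a short exact sequence of modules over the group ring ℤ[G], where F is a free ℤ[G]-module and N is a module whose underlying abelian group is torsion with the order of every element coprime to |G|. Then M is a projective ℤ[G]-module. -/

import Mathlib

open Finsupp Submodule

/-- Every submodule of a free `ℤ`-module of the form `ι →₀ ℤ` is free
(Pontryagin-style argument via a well-ordering of `ι`). -/

theorem submodule_finsupp_int_free {ι : Type} (M : Submodule ℤ (ι →₀ ℤ)) :
    Module.Free ℤ M := by
  classical
  letI : LinearOrder ι := IsWellOrder.linearOrder WellOrderingRel
  haveI : WellFoundedLT ι :=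
    ⟨(inferInstance : IsWellOrder ι WellOrderingRel).toIsWellFounded.wf⟩
  -- the ideal of leading coefficients at `α`
  set J : ι → Submodule ℤ ℤ := fun α =>
    (M ⊓ Finsupp.supported ℤ ℤ (Set.Iic α)).map (Finsupp.lapply α) with hJ
  haveI hprin : ∀ α, (J α).IsPrincipal := fun α =>
    (inferInstance : (show Ideal ℤ from J α).IsPrincipal)
  set d : ι → ℤ := fun α => (hprin α).generator with hd
  have hdJ : ∀ α, d α ∈ J α := fun α => (hprin α).generator_mem
  have hspan_d : ∀ α, span ℤ {d α} = J α := fun α => (hprin α).span_singleton_generator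
  have hv : ∀ α : ι, ∃ m : ι →₀ ℤ, m ∈ M ∧ (↑m.support : Set ι) ⊆ Set.Iic α ∧ m α = d α := by
    intro α
    obtain ⟨m, hm, hma⟩ := Submodule.mem_map.1 (hdJ α)
    exact ⟨m, hm.1, (Finsupp.mem_supported ℤ m).1 hm.2, hma⟩
  set S := {α : ι // d α ≠ 0} with hS
  set v : S → (ι →₀ ℤ) := fun α => (hv α.1).choose with hvdef
  have hvM : ∀ a : S, v a ∈ M := fun a => (hv a.1).choose_spec.1
  have hvsupp : ∀ a : S, ∀ i : ι, (v a) i ≠ 0 → i ≤ a.1 := by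
    intro a i hi
    exact (hv a.1).choose_spec.2.1 (Finsupp.mem_support_iff.2 hi)
  have hva : ∀ a : S, (v a) a.1 = d a.1 := fun a => (hv a.1).choose_spec.2.2
  -- linear independence
  have li : LinearIndependent ℤ v := by
    rw [linearIndependent_iff]
    intro l hl
    by_contra hl0
    have hne : l.support.Nonempty := Finsupp.support_nonempty_iff.2 hl0
    set a := l.support.max' hne with ha
    have hmem : a ∈ l.support := l.support.max'_mem hne
    have : (Finsupp.linearCombination ℤ v l) a.1 = l a * d a.1 := by
      rw [Finsupp.linearCombination_apply, Finsupp.sum, Finsupp.finset_sum_apply]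
      rw [Finset.sum_eq_single a]
      · rw [Finsupp.smul_apply, hva a, smul_eq_mul]
      · intro b hb hba
        have hblt : b.1 < a.1 := by
          have := l.support.le_max' b hb
          exact lt_of_le_of_ne (Subtype.coe_le_coe.2 this) (fun h => hba (Subtype.ext h))
        rw [Finsupp.smul_apply]
        have : (v b) a.1 = 0 := by
          by_contra h
          exact absurd (hvsupp b a.1 h) (not_le.2 hblt)
        rw [this, smul_zero]
      · intro h; exact absurd hmem h
    rw [hl] at this
    simp only [Finsupp.coe_zero, Pi.zero_apply] at this
    have hda : d a.1 ≠ 0 := a.2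
    have : l a = 0 := by
      rcases mul_eq_zero.1 this.symm with h | h
      · exact h
      · exact absurd h hda
    exact absurd this (Finsupp.mem_support_iff.1 hmem)
  -- spanning
  have key : ∀ α : ι, ∀ m : ι →₀ ℤ, m ∈ M → (∀ i ∈ m.support, i ≤ α) →
      m ∈ span ℤ (Set.range v) := by
    intro α
    induction α using WellFoundedLT.induction with
    | ind α IH =>
      intro m hm hsupp
      rcases eq_or_ne m 0 with rfl | hm0
      · exact zero_mem _
      · have hsne : m.support.Nonempty := Finsupp.support_nonempty_iff.2 hm0
        set t := m.support.max' hsne with ht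
        have htmem : t ∈ m.support := m.support.max'_mem hsne
        have htle : t ≤ α := hsupp _ htmem
        have hmt : m t ∈ J t := by
          refine Submodule.mem_map.2 ⟨m, ⟨hm, ?_⟩, rfl⟩
          exact (Finsupp.mem_supported ℤ m).2 (fun i hi => m.support.le_max' i hi)
        have hmtne : m t ≠ 0 := Finsupp.mem_support_iff.1 htmem
        have hdt : d t ≠ 0 := by
          intro h0
          rw [← hspan_d t, h0] at hmt
          simp only [Submodule.span_zero_singleton, Submodule.mem_bot] at hmt
          exact hmtne hmt
        obtain ⟨c, hc⟩ : ∃ c : ℤ, c • d t = m t :=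
          Submodule.mem_span_singleton.1 (by rw [hspan_d t]; exact hmt)
        set a : S := ⟨t, hdt⟩ with haS
        set m' := m - c • v a with hm'
        have hm'M : m' ∈ M := sub_mem hm (Submodule.smul_mem _ _ (hvM a))
        have hm'supp : ∀ i ∈ m'.support, i < t := by
          intro i hi
          have hine : m' i ≠ 0 := Finsupp.mem_support_iff.1 hi
          have hile : i ≤ t := by
            by_contra hgt
            push_neg at hgt
            have h1 : m i = 0 := by
              by_contra h
              exact absurd (m.support.le_max' i (Finsupp.mem_support_iff.2 h)) (not_le.2 hgt)
            have h2 : (v a) i = 0 := by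
              by_contra h
              exact absurd (hvsupp a i h) (not_le.2 hgt)
            apply hine
            simp [hm', h1, h2]
          rcases lt_or_eq_of_le hile with h | h
          · exact h
          · exfalso
            apply hine
            simp only [hm', Finsupp.sub_apply, Finsupp.smul_apply, h]
            rw [hva a, hc, sub_self]
        have hsplit : m = m' + c • v a := by rw [hm']; abel
        rcases eq_or_ne m' 0 with h0 | hm'0
        · rw [hsplit, h0, zero_add]
          exact Submodule.smul_mem _ _ (Submodule.subset_span ⟨a, rfl⟩)
        · have hsne' : m'.support.Nonempty := Finsupp.support_nonempty_iff.2 hm'0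
          set t' := m'.support.max' hsne' with ht'
          have ht'lt : t' < t := hm'supp _ (m'.support.max'_mem hsne')
          have hrec := IH t' (lt_of_lt_of_le ht'lt htle) m' hm'M
            (fun i hi => m'.support.le_max' i hi)
          rw [hsplit]
          exact add_mem hrec (Submodule.smul_mem _ _ (Submodule.subset_span ⟨a, rfl⟩))
  have hspan : span ℤ (Set.range v) = M := by
    apply le_antisymm
    · rw [span_le]
      rintro _ ⟨a, rfl⟩
      exact hvM a
    · intro m hm
      rcases eq_or_ne m 0 with rfl | hm0
      · exact zero_mem _
      · have hsne : m.support.Nonempty := Finsupp.support_nonempty_iff.2 hm0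
        exact key (m.support.max' hsne) m hm (fun i hi => m.support.le_max' i hi)
  exact Module.Free.of_basis ((Module.Basis.span li).map (LinearEquiv.ofEq _ _ hspan))

/-- Any abelian group admitting an injective `ℤ`-linear map into a free `ℤ`-module is free. -/

theorem free_int_of_injective {M F : Type} [AddCommGroup M] [AddCommGroup F]
    [Module.Free ℤ F] (j : M →ₗ[ℤ] F) (hj : Function.Injective j) : Module.Free ℤ M := by
  let b := Module.Free.chooseBasis ℤ F
  let j' : M →ₗ[ℤ] (Module.Free.ChooseBasisIndex ℤ F →₀ ℤ) := b.repr.toLinearMap ∘ₗ j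
  have hj' : Function.Injective j' := b.repr.injective.comp hj
  haveI : Module.Free ℤ (LinearMap.range j') := submodule_finsupp_int_free _
  exact Module.Free.of_equiv (LinearEquiv.ofInjective j' hj').symm

/-- Let `G` be a finite group and let `0 → M → F → N → 0` be a short
exact sequence of `ℤ[G]`-modules, where `F` is a free `ℤ[G]`-module and the underlying
abelian group of `N` is torsion with the order of every element coprime to `|G|`.
Then `M` is a projective `ℤ[G]`-module. -/
theorem projective_of_ses_free_coprimeTorsion
    {G : Type} [Group G] [Finite G]
    {M F N : Type}
    [AddCommGroup M] [Module (MonoidAlgebra ℤ G) M]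
    [AddCommGroup F] [Module (MonoidAlgebra ℤ G) F]
    [AddCommGroup N] [Module (MonoidAlgebra ℤ G) N]
    (hF : Module.Free (MonoidAlgebra ℤ G) F)
    (htor : ∀ x : N, IsOfFinAddOrder x)
    (hcop : ∀ x : N, Nat.Coprime (addOrderOf x) (Nat.card G))
    (f : M →ₗ[MonoidAlgebra ℤ G] F) (g : F →ₗ[MonoidAlgebra ℤ G] N)
    (hf : Function.Injective f) (hg : Function.Surjective g)
    (hfg : LinearMap.ker g = LinearMap.range f) :
    Module.Projective (MonoidAlgebra ℤ G) M := by
  classical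
  haveI := hF
  haveI := Fintype.ofFinite G
  set n := Nat.card G with hn
  -- F is free as a ℤ-module
  haveI : Module.Free ℤ F := by
    let bR : Module.Basis G ℤ (MonoidAlgebra ℤ G) := MonoidAlgebra.basis G ℤ
    let c := Module.Free.chooseBasis (MonoidAlgebra ℤ G) F
    exact Module.Free.of_basis (bR.smulTower c)
  -- M is free (hence projective) as a ℤ-module
  haveI : Module.Free ℤ M := free_int_of_injective (f.toAddMonoidHom.toIntLinearMap) hf
  -- the canonical surjection from the free module on M
  set π : (M →₀ MonoidAlgebra ℤ G) →ₗ[MonoidAlgebra ℤ G] M :=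
    Finsupp.linearCombination (MonoidAlgebra ℤ G) (id : M → M) with hπdef
  have hπ : Function.Surjective π := Finsupp.linearCombination_id_surjective _ M
  -- a ℤ-linear section of π
  obtain ⟨σ, hσ⟩ := Module.projective_lifting_property
    (π.toAddMonoidHom.toIntLinearMap) (LinearMap.id : M →ₗ[ℤ] M) hπ
  have hσx : ∀ x : M, π (σ x) = x := fun x => LinearMap.congr_fun hσ x
  -- averaged map s₀ with π ∘ s₀ = n • id
  set ofG : G → MonoidAlgebra ℤ G := fun g => MonoidAlgebra.of ℤ G g with hofG
  let smulQ : MonoidAlgebra ℤ G → ((M →₀ MonoidAlgebra ℤ G) →ₗ[ℤ] (M →₀ MonoidAlgebra ℤ G)) :=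
    fun r => (DistribSMul.toAddMonoidHom _ r).toIntLinearMap
  let smulM : MonoidAlgebra ℤ G → (M →ₗ[ℤ] M) :=
    fun r => (DistribSMul.toAddMonoidHom _ r).toIntLinearMap
  set s₀' : M →ₗ[ℤ] (M →₀ MonoidAlgebra ℤ G) :=
    ∑ g : G, (smulQ (ofG g)) ∘ₗ σ ∘ₗ (smulM (ofG g⁻¹)) with hs₀'def
  have hs₀'apply : ∀ x : M, s₀' x = ∑ g : G, (ofG g) • σ ((ofG g⁻¹) • x) := by
    intro x
    rw [hs₀'def, LinearMap.sum_apply]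
    rfl
  have hcomm : ∀ (r : MonoidAlgebra ℤ G) (x : M), s₀' (r • x) = r • s₀' x := by
    intro r x
    induction r using MonoidAlgebra.induction_on with
    | of h =>
      rw [hs₀'apply, hs₀'apply, Finset.smul_sum]
      refine Fintype.sum_equiv (Equiv.mulLeft h).symm _ _ ?_
      intro a
      simp only [Equiv.mulLeft_symm, Equiv.coe_mulLeft]
      rw [← mul_smul, ← mul_smul, ← map_mul, ← map_mul]
      rw [show h * (h⁻¹ * a) = a by group, show (h⁻¹ * a)⁻¹ = a⁻¹ * h by group]
    | add r r' hr hr' =>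
      rw [add_smul, map_add, hr, hr', add_smul]
    | smul z r hr =>
      rw [smul_assoc, map_smul, hr, smul_assoc]
  set s₀ : M →ₗ[MonoidAlgebra ℤ G] (M →₀ MonoidAlgebra ℤ G) :=
    { toFun := s₀', map_add' := s₀'.map_add, map_smul' := hcomm } with hs₀def
  have hπs₀ : ∀ x : M, π (s₀ x) = n • x := by
    intro x
    show π (s₀' x) = n • x
    rw [hs₀'apply, map_sum]
    have h1 : ∀ g : G, π ((ofG g) • σ ((ofG g⁻¹) • x)) = x := by
      intro g
      rw [map_smul, hσx, ← mul_smul, ← map_mul, mul_inv_cancel, map_one, one_smul]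
    rw [Finset.sum_congr rfl (fun g _ => h1 g), Finset.sum_const, Finset.card_univ, hn,
      Nat.card_eq_fintype_card]
  -- multiplication by n is an isomorphism of N
  set u : N →ₗ[MonoidAlgebra ℤ G] N :=
    { toFun := fun y => n • y, map_add' := fun a b => smul_add n a b,
      map_smul' := fun r y => smul_comm n r y } with hudef
  have hu : Function.Bijective u := by
    constructor
    · intro a b hab
      have h0 : n • (a - b) = 0 := by
        have : u a - u b = 0 := by rw [hab, sub_self]
        simpa [hudef, smul_sub] using this
      have h1 : addOrderOf (a - b) ∣ n := addOrderOf_dvd_of_nsmul_eq_zero h0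
      have h2 : addOrderOf (a - b) ∣ 1 := (hcop (a - b)) ▸ Nat.dvd_gcd dvd_rfl h1
      have h3 : addOrderOf (a - b) = 1 := Nat.dvd_one.1 h2
      exact sub_eq_zero.1 (AddMonoid.addOrderOf_eq_one_iff.1 h3)
    · intro y
      have hco : Nat.Coprime (addOrderOf y) n := hcop y
      have hbez : (addOrderOf y : ℤ) * Nat.gcdA (addOrderOf y) n
          + (n : ℤ) * Nat.gcdB (addOrderOf y) n = 1 := by
        rw [← Nat.gcd_eq_gcd_ab]
        exact_mod_cast hco
      refine ⟨Nat.gcdB (addOrderOf y) n • y, ?_⟩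
      show n • (Nat.gcdB (addOrderOf y) n • y) = y
      have hordz : (addOrderOf y : ℤ) • y = 0 := by
        rw [natCast_zsmul]
        exact addOrderOf_nsmul_eq_zero y
      calc n • (Nat.gcdB (addOrderOf y) n • y)
          = ((n : ℤ) * Nat.gcdB (addOrderOf y) n) • y := by
            rw [mul_smul, natCast_zsmul]
        _ = (1 - (addOrderOf y : ℤ) * Nat.gcdA (addOrderOf y) n) • y := by
            rw [← hbez]; ring_nf
        _ = y - (Nat.gcdA (addOrderOf y) n) • ((addOrderOf y : ℤ) • y) := by
            rw [sub_smul, one_smul, mul_comm, mul_smul]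
        _ = y := by rw [hordz, smul_zero, sub_zero]
  set ue := LinearEquiv.ofBijective u hu with huedef
  set u' := ue.symm with hu'def
  have hnu' : ∀ z : N, n • (u'.toLinearMap z) = z := by
    intro z
    have := ue.apply_symm_apply z
    rwa [huedef, LinearEquiv.ofBijective_apply] at this
  -- lift u' ∘ g through g
  obtain ⟨v', hv'⟩ := Module.projective_lifting_property g (u'.toLinearMap ∘ₗ g) hg
  have hv'x : ∀ x : F, g (v' x) = u'.toLinearMap (g x) := fun x => LinearMap.congr_fun hv' x
  -- the identification M ≃ range f
  have hker : ∀ x : M, g (f x) = 0 := by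
    intro x
    have : f x ∈ LinearMap.ker g := hfg ▸ LinearMap.mem_range_self f x
    exact LinearMap.mem_ker.1 this
  set e := LinearEquiv.ofInjective f hf with hedef
  have hfe : ∀ y : LinearMap.range f, f (e.symm y) = y := by
    intro y
    conv_rhs => rw [← e.apply_symm_apply y]
    rw [hedef, LinearEquiv.ofInjective_apply]
  -- w' : M → M covering v'
  have hw'mem : ∀ x : M, (v' ∘ₗ f) x ∈ LinearMap.range f := by
    intro x
    rw [← hfg]
    exact LinearMap.mem_ker.2 (by rw [LinearMap.comp_apply, hv'x, hker, map_zero])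
  set w' : M →ₗ[MonoidAlgebra ℤ G] M :=
    e.symm.toLinearMap ∘ₗ LinearMap.codRestrict (LinearMap.range f) (v' ∘ₗ f) hw'mem with hw'def
  have hw' : ∀ x : M, f (w' x) = v' (f x) := by
    intro x
    have := hfe (LinearMap.codRestrict (LinearMap.range f) (v' ∘ₗ f) hw'mem x)
    rwa [LinearMap.codRestrict_apply] at this
  -- φ : F → M with f ∘ φ = n • v' - id
  set ψF : F →ₗ[MonoidAlgebra ℤ G] F :=
    { toFun := fun x => n • v' x - x,
      map_add' := by
        intro a b
        show n • v' (a + b) - (a + b) = (n • v' a - a) + (n • v' b - b)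
        rw [map_add, smul_add]
        abel,
      map_smul' := by
        intro r x
        show n • v' (r • x) - r • x = r • (n • v' x - x)
        rw [map_smul, smul_sub, smul_comm n r (v' x)] } with hψFdef
  have hφmem : ∀ x : F, ψF x ∈ LinearMap.range f := by
    intro x
    rw [← hfg]
    refine LinearMap.mem_ker.2 ?_
    show g (n • v' x - x) = 0
    rw [map_sub, map_nsmul, hv'x, hnu', sub_self]
  set φ : F →ₗ[MonoidAlgebra ℤ G] M :=
    e.symm.toLinearMap ∘ₗ LinearMap.codRestrict (LinearMap.range f) ψF hφmem with hφdef
  have hφ : ∀ x : F, f (φ x) = n • v' x - x := by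
    intro x
    have := hfe (LinearMap.codRestrict (LinearMap.range f) ψF hφmem x)
    rwa [LinearMap.codRestrict_apply] at this
  -- lift φ through π
  obtain ⟨Φ, hΦ⟩ := Module.projective_lifting_property π φ hπ
  have hΦx : ∀ x : F, π (Φ x) = φ x := fun x => LinearMap.congr_fun hΦ x
  -- the splitting
  set s : M →ₗ[MonoidAlgebra ℤ G] (M →₀ MonoidAlgebra ℤ G) := s₀ ∘ₗ w' - Φ ∘ₗ f with hsdef
  refine Module.projective_def.2 ⟨s, ?_⟩
  intro x
  show π (s x) = x
  have hsx : π (s x) = n • w' x - φ (f x) := by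
    rw [hsdef]
    simp only [LinearMap.sub_apply, LinearMap.comp_apply, map_sub]
    rw [hπs₀, hΦx]
  rw [hsx]
  apply hf
  rw [map_sub, map_nsmul, hw', hφ]
  abel
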